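/- Suppose for all n ≥ 3 the prime gap satisfies p_{n+1} - p_n < (22/25) · sqrt(p_n) · ln(p_n). Then for all n ≥ 1, p_{n+1}^(1/4) - p_n^(1/4) < 13/40. -/
import Mathlib


/-- `prime n` is the n-th prime, with `prime 1 = 2`. -/
noncomputable def prime (n : ℕ) : ℕ := Nat.nth Nat.Prime (n - 1)

lemma quarter_lt {x c : ℝ} (hx : 0 ≤ x) (hc : 0 < c) (h : x < c^4) :
    x ^ ((1:ℝ)/4) < c := by
  have h4 : ((c:ℝ)^4) ^ ((1:ℝ)/4) = c := by
    rw [← Real.rpow_natCast c 4, ← Real.rpow_mul hc.le]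
    norm_num
  calc x ^ ((1:ℝ)/4) < (c^4) ^ ((1:ℝ)/4) :=
        Real.rpow_lt_rpow hx h (by norm_num)
    _ = c := h4

lemma le_quarter {x c : ℝ} (hc : 0 ≤ c) (h : c^4 ≤ x) :
    c ≤ x ^ ((1:ℝ)/4) := by
  have h4 : ((c:ℝ)^4) ^ ((1:ℝ)/4) = c := by
    rw [← Real.rpow_natCast c 4, ← Real.rpow_mul hc]
    norm_num
  calc c = (c^4) ^ ((1:ℝ)/4) := h4.symm
    _ ≤ x ^ ((1:ℝ)/4) := Real.rpow_le_rpow (by positivity) h (by norm_num)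

lemma key {a b : ℝ} (hb : 2 ≤ b) (ha : 0 ≤ a)
    (hab : a - b < 22/25 * Real.sqrt b * Real.log b) :
    a ^ ((1:ℝ)/4) - b ^ ((1:ℝ)/4) < 13/40 := by
  set t := b ^ ((1:ℝ)/4) with htdef
  have hb0 : (0:ℝ) ≤ b := by linarith
  have ht1 : 1 ≤ t :=
    le_quarter (x := b) (c := 1) (by norm_num) (by norm_num; linarith)
  have ht0 : 0 < t := by linarith
  have htb : t ^ 4 = b := by
    rw [htdef, ← Real.rpow_natCast (b ^ ((1:ℝ)/4)) 4, ← Real.rpow_mul hb0]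
    norm_num
  have hsqrt : Real.sqrt b = t ^ 2 := by
    rw [Real.sqrt_eq_rpow, htdef, ← Real.rpow_natCast (b ^ ((1:ℝ)/4)) 2,
      ← Real.rpow_mul hb0]
    norm_num
  have hlogb : Real.log b = 4 * Real.log t := by
    rw [← htb, Real.log_pow]; push_cast; ring
  -- log t ≤ t / e
  have he : (0:ℝ) < Real.exp 1 := Real.exp_pos 1
  have hlogt : Real.log t ≤ t / Real.exp 1 := by
    have h1 := Real.log_le_sub_one_of_pos (show 0 < t / Real.exp 1 by positivity)
    rw [Real.log_div (by linarith) (ne_of_gt he), Real.log_exp] at h1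
    linarith
  have hegt : (176:ℝ)/65 < Real.exp 1 := by
    have := Real.exp_one_gt_d9
    linarith
  have hlogt0 : 0 ≤ Real.log t := Real.log_nonneg ht1
  have hkey : Real.log b ≤ 65/44 * t := by
    have h2 : Real.exp 1 * Real.log t ≤ t := by
      calc Real.exp 1 * Real.log t ≤ Real.exp 1 * (t / Real.exp 1) := by
            exact mul_le_mul_of_nonneg_left hlogt he.le
        _ = t := by field_simp
    nlinarith [mul_le_mul_of_nonneg_right hegt.le hlogt0]
  have halt : a < t^4 + 13/10 * t^3 := by
    have h3 : 22/25 * Real.sqrt b * Real.log b ≤ 13/10 * t^3 := by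
      rw [hsqrt]
      nlinarith [sq_nonneg t]
    nlinarith
  have : a ^ ((1:ℝ)/4) < t + 13/40 := by
    apply quarter_lt ha (by linarith)
    nlinarith [pow_pos ht0 3, pow_pos ht0 2]
  linarith

lemma prime_two' : prime 1 = 2 := by
  have : Nat.count Nat.Prime 2 = 0 := by decide
  simpa [prime, this] using Nat.nth_count Nat.prime_two

lemma prime_three' : prime 2 = 3 := by
  have : Nat.count Nat.Prime 3 = 1 := by decide
  simpa [prime, this] using Nat.nth_count Nat.prime_three

lemma prime_five' : prime 3 = 5 := by
  have : Nat.count Nat.Prime 5 = 2 := by decide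
  simpa [prime, this] using Nat.nth_count (by norm_num : Nat.Prime 5)

lemma prime_prime (n : ℕ) : Nat.Prime (prime n) :=
  Nat.nth_mem_of_infinite Nat.infinite_setOf_prime _

theorem fourth_root_andrica
    (h : ∀ n : ℕ, 3 ≤ n →
      (prime (n+1) : ℝ) - prime n <
        22/25 * Real.sqrt (prime n) * Real.log (prime n)) :
    ∀ n : ℕ, 1 ≤ n →
      (prime (n+1) : ℝ) ^ ((1:ℝ)/4) - (prime n : ℝ) ^ ((1:ℝ)/4) < 13/40 := by
  intro n hn
  rcases Nat.lt_or_ge n 3 with h3 | h3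
  · interval_cases n
    · rw [prime_two', prime_three']
      have h1 : ((3:ℕ):ℝ) ^ ((1:ℝ)/4) < 1.32 :=
        quarter_lt (by norm_num) (by norm_num) (by norm_num)
      have h2 : (1.18:ℝ) ≤ ((2:ℕ):ℝ) ^ ((1:ℝ)/4) :=
        le_quarter (by norm_num) (by norm_num)
      linarith
    · rw [prime_three', prime_five']
      have h1 : ((5:ℕ):ℝ) ^ ((1:ℝ)/4) < 1.496 :=
        quarter_lt (by norm_num) (by norm_num) (by norm_num)
      have h2 : (1.31:ℝ) ≤ ((3:ℕ):ℝ) ^ ((1:ℝ)/4) :=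
        le_quarter (by norm_num) (by norm_num)
      linarith
  · exact key (by exact_mod_cast (prime_prime n).two_le) (by positivity) (h n h3)
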